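/- (q-stuffle star version, depth one) For 0 < q < 1 and integers i, j ≥ 2, ζ_q^⋆(i) ζ_q^⋆(j) = ζ_q^⋆(i,j) + ζ_q^⋆(j,i) - ζ_q(i+j) - (1-q)·Σ_{m≥1} q^{(i+j-2)m}/[m]^{i+j-1}. -/

import Mathlib

open scoped BigOperators

/-- The q-integer [m] = (1-q^m)/(1-q). -/
noncomputable def qint (q : ℝ) (m : ℕ) : ℝ := (1 - q ^ m) / (1 - q)

/-- Depth-one q-zeta value ζ_q(k) = Σ_{m≥1} q^{(k-1)m}/[m]^k. -/
noncomputable def zetaQ (q : ℝ) (k : ℕ) : ℝ :=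
  ∑' m : ℕ, q ^ ((k - 1) * (m + 1)) / (qint q (m + 1)) ^ k

/-- Depth-two qMZV: sum over m₁ > m₂ ≥ 1, parametrized by m₂ = p.2+1, m₁ = p.2+p.1+2. -/
noncomputable def zetaQ2 (q : ℝ) (k₁ k₂ : ℕ) : ℝ :=
  ∑' p : ℕ × ℕ,
    q ^ ((k₁ - 1) * (p.2 + p.1 + 2) + (k₂ - 1) * (p.2 + 1)) /
      ((qint q (p.2 + p.1 + 2)) ^ k₁ * (qint q (p.2 + 1)) ^ k₂)

/-- Depth-two qMZSV: sum over m₁ ≥ m₂ ≥ 1, parametrized by m₂ = p.2+1, m₁ = p.2+p.1+1. -/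
noncomputable def zetaQStar2 (q : ℝ) (k₁ k₂ : ℕ) : ℝ :=
  ∑' p : ℕ × ℕ,
    q ^ ((k₁ - 1) * (p.2 + p.1 + 1) + (k₂ - 1) * (p.2 + 1)) /
      ((qint q (p.2 + p.1 + 1)) ^ k₁ * (qint q (p.2 + 1)) ^ k₂)

/-- Interpolated q-double zeta value. -/
noncomputable def zetaQT (q t : ℝ) (k₁ k₂ : ℕ) : ℝ :=
  zetaQ2 q k₁ k₂ + t * (zetaQ q (k₁ + k₂) + (1 - q) * zetaQ q (k₁ + k₂ - 1))

/-! ### Auxiliary lemmas -/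

/-- Single term of the depth-one q-zeta value. -/
noncomputable def aQ (q : ℝ) (k m : ℕ) : ℝ := q ^ ((k - 1) * (m + 1)) / (qint q (m + 1)) ^ k

lemma qint_ge_one {q : ℝ} (hq0 : 0 < q) (hq1 : q < 1) (m : ℕ) : 1 ≤ qint q (m + 1) := by
  rw [qint, le_div_iff₀ (by linarith)]
  have h : q ^ (m + 1) ≤ q := by
    calc q ^ (m + 1) ≤ q ^ 1 := pow_le_pow_of_le_one hq0.le hq1.le (by omega)
    _ = q := pow_one q
  linarith

lemma qint_pos {q : ℝ} (hq0 : 0 < q) (hq1 : q < 1) (m : ℕ) : 0 < qint q (m + 1) :=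
  lt_of_lt_of_le one_pos (qint_ge_one hq0 hq1 m)

lemma aQ_nonneg {q : ℝ} (hq0 : 0 < q) (hq1 : q < 1) (k m : ℕ) : 0 ≤ aQ q k m :=
  div_nonneg (pow_nonneg hq0.le _) (pow_nonneg (qint_pos hq0 hq1 m).le _)

lemma summable_aQ {q : ℝ} (hq0 : 0 < q) (hq1 : q < 1) {k : ℕ} (hk : 2 ≤ k) :
    Summable (aQ q k) := by
  have hr0 : (0:ℝ) ≤ q ^ (k - 1) := pow_nonneg hq0.le _
  have hr1 : q ^ (k - 1) < 1 := by
    calc q ^ (k - 1) ≤ q ^ 1 := pow_le_pow_of_le_one hq0.le hq1.le (by omega)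
    _ = q := pow_one q
    _ < 1 := hq1
  have hgeo : Summable (fun m : ℕ => (q ^ (k - 1)) ^ (m + 1)) := by
    simpa [pow_succ, mul_comm] using (summable_geometric_of_lt_one hr0 hr1).mul_left (q ^ (k - 1))
  refine Summable.of_nonneg_of_le (fun m => aQ_nonneg hq0 hq1 k m) (fun m => ?_) hgeo
  rw [aQ, ← pow_mul]
  apply div_le_self (pow_nonneg hq0.le _)
  exact one_le_pow₀ (qint_ge_one hq0 hq1 m)

lemma summable_aQ_mul {q : ℝ} (hq0 : 0 < q) (hq1 : q < 1) {k₁ k₂ : ℕ} (h1 : 2 ≤ k₁) (h2 : 2 ≤ k₂) :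
    Summable (fun p : ℕ × ℕ => aQ q k₁ p.1 * aQ q k₂ p.2) :=
  (summable_aQ hq0 hq1 h1).mul_of_nonneg (summable_aQ hq0 hq1 h2)
    (fun m => aQ_nonneg hq0 hq1 k₁ m) (fun m => aQ_nonneg hq0 hq1 k₂ m)

lemma zetaQStar2_eq {q : ℝ} (hq0 : 0 < q) (hq1 : q < 1) {k₁ k₂ : ℕ} (h1 : 2 ≤ k₁) (h2 : 2 ≤ k₂) :
    zetaQStar2 q k₁ k₂ =
      (∑' n : ℕ, aQ q k₁ n * aQ q k₂ n) +
        ∑' d : ℕ, ∑' n : ℕ, aQ q k₁ (n + d + 1) * aQ q k₂ n := by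
  have hstep : zetaQStar2 q k₁ k₂ = ∑' p : ℕ × ℕ, aQ q k₁ (p.2 + p.1) * aQ q k₂ p.2 := by
    refine tsum_congr fun p => ?_
    rw [aQ, aQ, div_mul_div_comm, ← pow_add]
  rw [hstep]
  have hinj : Function.Injective (fun p : ℕ × ℕ => ((p.2 + p.1 : ℕ), p.2)) := by
    intro p p' h
    simp only [Prod.mk.injEq] at h
    obtain ⟨h1, h2⟩ := h
    exact Prod.ext (by omega) h2
  have hG : Summable (fun p : ℕ × ℕ => aQ q k₁ (p.2 + p.1) * aQ q k₂ p.2) := by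
    have := Summable.comp_injective (f := fun p : ℕ × ℕ => aQ q k₁ p.1 * aQ q k₂ p.2)
      (i := fun p : ℕ × ℕ => ((p.2 + p.1 : ℕ), p.2)) (summable_aQ_mul hq0 hq1 h1 h2) hinj
    exact this
  have houter : Summable (fun d : ℕ => ∑' n : ℕ, aQ q k₁ ((d, n).2 + (d, n).1) * aQ q k₂ (d, n).2) :=
    ⟨_, hG.hasSum.prod_fiberwise (fun d => (hG.prod_factor d).hasSum)⟩
  rw [hG.tsum_prod, houter.tsum_eq_zero_add]
  rfl

lemma aQ_diag {q : ℝ} (hq0 : 0 < q) (hq1 : q < 1) {i j : ℕ} (hi : 2 ≤ i) (hj : 2 ≤ j) (n : ℕ) :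
    aQ q (i + j) n + (1 - q) * aQ q (i + j - 1) n = aQ q i n * aQ q j n := by
  obtain ⟨i', rfl⟩ : ∃ i', i = i' + 2 := ⟨i - 2, by omega⟩
  obtain ⟨j', rfl⟩ : ∃ j', j = j' + 2 := ⟨j - 2, by omega⟩
  have hX : qint q (n + 1) ≠ 0 := (qint_pos hq0 hq1 n).ne'
  have h1q : (1:ℝ) - q ≠ 0 := by linarith
  have key : (1 - q) * qint q (n + 1) = 1 - q ^ (n + 1) := by
    rw [qint, mul_comm, div_mul_cancel₀ _ h1q]
  rw [aQ, aQ, aQ, aQ]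
  rw [show i' + 2 + (j' + 2) - 1 = i' + j' + 3 from by omega,
      show i' + 2 + (j' + 2) = i' + j' + 4 from by omega,
      show i' + j' + 3 - 1 = i' + j' + 2 from by omega,
      show i' + 2 - 1 = i' + 1 from by omega,
      show j' + 2 - 1 = j' + 1 from by omega]
  have e1 : (i' + j' + 3) * (n + 1) = (i' + j' + 2) * (n + 1) + (n + 1) := by ring
  have e2 : (i' + 1) * (n + 1) + (j' + 1) * (n + 1) = (i' + j' + 2) * (n + 1) := by ring
  rw [div_mul_div_comm, ← pow_add q, e2, ← pow_add (qint q (n + 1)), e1, pow_add q]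
  rw [show i' + 2 + (j' + 2) = i' + j' + 3 + 1 from by omega,
      show i' + j' + 4 = i' + j' + 3 + 1 from by omega]
  generalize q ^ ((i' + j' + 2) * (n + 1)) = A
  have hY : qint q (n + 1) ^ (i' + j' + 3) ≠ 0 := pow_ne_zero _ hX
  rw [pow_succ]
  field_simp
  linear_combination (A * qint q (n + 1) ^ 3 * qint q (n + 1) ^ i' * qint q (n + 1) ^ j') * key

lemma zeta_diag {q : ℝ} (hq0 : 0 < q) (hq1 : q < 1) {i j : ℕ} (hi : 2 ≤ i) (hj : 2 ≤ j) :
    zetaQ q (i + j) + (1 - q) * zetaQ q (i + j - 1) = ∑' n : ℕ, aQ q i n * aQ q j n := by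
  have h1 : Summable (aQ q (i + j)) := summable_aQ hq0 hq1 (by omega)
  have h2 : Summable (fun n => (1 - q) * aQ q (i + j - 1) n) :=
    (summable_aQ hq0 hq1 (k := i + j - 1) (by omega)).mul_left _
  have e : zetaQ q (i + j) = ∑' n, aQ q (i + j) n := rfl
  have e2 : (1 - q) * zetaQ q (i + j - 1) = ∑' n, (1 - q) * aQ q (i + j - 1) n := by
    rw [show zetaQ q (i + j - 1) = ∑' n, aQ q (i + j - 1) n from rfl, ← tsum_mul_left]
  rw [e, e2, ← h1.tsum_add h2]
  exact tsum_congr fun n => aQ_diag hq0 hq1 hi hj n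

lemma grid_split {q : ℝ} (hq0 : 0 < q) (hq1 : q < 1) {i j : ℕ} (hi : 2 ≤ i) (hj : 2 ≤ j) :
    zetaQ q i * zetaQ q j =
      (∑' n : ℕ, aQ q i n * aQ q j n)
      + (∑' d : ℕ, ∑' n : ℕ, aQ q i (n + d + 1) * aQ q j n)
      + (∑' d : ℕ, ∑' n : ℕ, aQ q i n * aQ q j (n + d + 1)) := by
  classical
  have hSi : Summable (aQ q i) := summable_aQ hq0 hq1 hi
  have hSj : Summable (aQ q j) := summable_aQ hq0 hq1 hj
  have hh : Summable (fun p : ℕ × ℕ => aQ q i p.1 * aQ q j p.2) := summable_aQ_mul hq0 hq1 hi hj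
  set h : ℕ × ℕ → ℝ := fun p => aQ q i p.1 * aQ q j p.2 with hdef
  have hni : Summable (fun m => ‖aQ q i m‖) := by
    refine hSi.congr fun m => ?_
    rw [Real.norm_eq_abs, abs_of_nonneg (aQ_nonneg hq0 hq1 i m)]
  have hnj : Summable (fun m => ‖aQ q j m‖) := by
    refine hSj.congr fun m => ?_
    rw [Real.norm_eq_abs, abs_of_nonneg (aQ_nonneg hq0 hq1 j m)]
  have hprod : zetaQ q i * zetaQ q j = ∑' p : ℕ × ℕ, h p :=
    tsum_mul_tsum_of_summable_norm hni hnj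
  rw [hprod]
  set S1 : Set (ℕ × ℕ) := {p | p.2 < p.1} with hS1
  set S2 : Set (ℕ × ℕ) := {p | p.1 < p.2} with hS2
  set S3 : Set (ℕ × ℕ) := {p | p.1 = p.2} with hS3
  have hsplit : h = S3.indicator h + S1.indicator h + S2.indicator h := by
    funext p
    simp only [Pi.add_apply, Set.indicator_apply, hS1, hS2, hS3, Set.mem_setOf_eq]
    rcases lt_trichotomy p.1 p.2 with h' | h' | h'
    · rw [if_neg (by omega), if_neg (by omega), if_pos h']; ring
    · rw [if_pos h', if_neg (by omega), if_neg (by omega)]; ring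
    · rw [if_neg (by omega), if_pos h', if_neg (by omega)]; ring
  have hsum1 : Summable (S1.indicator h) := hh.indicator _
  have hsum2 : Summable (S2.indicator h) := hh.indicator _
  have hsum3 : Summable (S3.indicator h) := hh.indicator _
  have htsum : ∑' p, h p = (∑' p, S3.indicator h p) + (∑' p, S1.indicator h p) + ∑' p, S2.indicator h p := by
    conv_lhs => rw [hsplit]
    simp only [Pi.add_apply]
    rw [Summable.tsum_add ((hsum3.add hsum1).congr fun p => rfl) hsum2,
        Summable.tsum_add hsum3 hsum1]
  rw [htsum]
  have hd : ∑' p, S3.indicator h p = ∑' n : ℕ, aQ q i n * aQ q j n := by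
    have hinj : Function.Injective (fun m : ℕ => ((m, m) : ℕ × ℕ)) := by
      intro a b hab; exact congrArg Prod.fst hab
    have hsupp : Function.support (S3.indicator h) ⊆ Set.range (fun m : ℕ => ((m, m) : ℕ × ℕ)) := by
      intro p hp
      have hmem : p ∈ S3 := Set.support_indicator_subset hp
      exact ⟨p.1, by simp only [hS3, Set.mem_setOf_eq] at hmem; exact Prod.ext rfl hmem⟩
    rw [← hinj.tsum_eq hsupp]
    refine tsum_congr fun m => ?_
    rw [Set.indicator_of_mem (by simp [hS3])]
  have hs1 : ∑' p, S1.indicator h p = ∑' d : ℕ, ∑' n : ℕ, aQ q i (n + d + 1) * aQ q j n := by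
    have hinj : Function.Injective (fun p : ℕ × ℕ => ((p.2 + p.1 + 1, p.2) : ℕ × ℕ)) := by
      intro p p' hpe
      simp only [Prod.mk.injEq] at hpe
      exact Prod.ext (by omega) hpe.2
    have hsupp : Function.support (S1.indicator h) ⊆ Set.range (fun p : ℕ × ℕ => ((p.2 + p.1 + 1, p.2) : ℕ × ℕ)) := by
      intro p hp
      have hmem : p ∈ S1 := Set.support_indicator_subset hp
      simp only [hS1, Set.mem_setOf_eq] at hmem
      exact ⟨(p.1 - p.2 - 1, p.2), Prod.ext (by simp; omega) rfl⟩
    rw [← hinj.tsum_eq hsupp]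
    have hterm : ∀ c : ℕ × ℕ, S1.indicator h ((c.2 + c.1 + 1, c.2) : ℕ × ℕ) = aQ q i (c.2 + c.1 + 1) * aQ q j c.2 := by
      intro c
      rw [Set.indicator_of_mem (by simp only [hS1, Set.mem_setOf_eq]; omega)]
    calc (∑' c : ℕ × ℕ, S1.indicator h ((c.2 + c.1 + 1, c.2) : ℕ × ℕ))
        = ∑' c : ℕ × ℕ, aQ q i (c.2 + c.1 + 1) * aQ q j c.2 := tsum_congr hterm
      _ = ∑' d : ℕ, ∑' n : ℕ, aQ q i (n + d + 1) * aQ q j n := by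
          have hG : Summable (fun c : ℕ × ℕ => aQ q i (c.2 + c.1 + 1) * aQ q j c.2) := by
            have := Summable.comp_injective (f := fun p : ℕ × ℕ => aQ q i p.1 * aQ q j p.2)
              (i := fun p : ℕ × ℕ => ((p.2 + p.1 + 1 : ℕ), p.2)) hh hinj
            exact this
          rw [hG.tsum_prod]
  have hs2 : ∑' p, S2.indicator h p = ∑' d : ℕ, ∑' n : ℕ, aQ q i n * aQ q j (n + d + 1) := by
    have hinj : Function.Injective (fun p : ℕ × ℕ => ((p.2, p.2 + p.1 + 1) : ℕ × ℕ)) := by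
      intro p p' hpe
      simp only [Prod.mk.injEq] at hpe
      exact Prod.ext (by omega) hpe.1
    have hsupp : Function.support (S2.indicator h) ⊆ Set.range (fun p : ℕ × ℕ => ((p.2, p.2 + p.1 + 1) : ℕ × ℕ)) := by
      intro p hp
      have hmem : p ∈ S2 := Set.support_indicator_subset hp
      simp only [hS2, Set.mem_setOf_eq] at hmem
      exact ⟨(p.2 - p.1 - 1, p.1), Prod.ext rfl (by simp; omega)⟩
    rw [← hinj.tsum_eq hsupp]
    have hterm : ∀ c : ℕ × ℕ, S2.indicator h ((c.2, c.2 + c.1 + 1) : ℕ × ℕ) = aQ q i c.2 * aQ q j (c.2 + c.1 + 1) := by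
      intro c
      rw [Set.indicator_of_mem (by simp only [hS2, Set.mem_setOf_eq]; omega)]
    calc (∑' c : ℕ × ℕ, S2.indicator h ((c.2, c.2 + c.1 + 1) : ℕ × ℕ))
        = ∑' c : ℕ × ℕ, aQ q i c.2 * aQ q j (c.2 + c.1 + 1) := tsum_congr hterm
      _ = ∑' d : ℕ, ∑' n : ℕ, aQ q i n * aQ q j (n + d + 1) := by
          have hG : Summable (fun c : ℕ × ℕ => aQ q i c.2 * aQ q j (c.2 + c.1 + 1)) := by
            have := Summable.comp_injective (f := fun p : ℕ × ℕ => aQ q i p.1 * aQ q j p.2)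
              (i := fun p : ℕ × ℕ => ((p.2 : ℕ), p.2 + p.1 + 1)) hh hinj
            exact this
          rw [hG.tsum_prod]
  rw [hd, hs1, hs2]

theorem stmt_18 (q : ℝ) (hq0 : 0 < q) (hq1 : q < 1) (i j : ℕ) (hi : 2 ≤ i) (hj : 2 ≤ j) :
    zetaQ q i * zetaQ q j =
      zetaQStar2 q i j + zetaQStar2 q j i - zetaQ q (i + j) -
        (1 - q) * zetaQ q (i + j - 1) := by
  have hgrid := grid_split hq0 hq1 hi hj
  have hA : zetaQStar2 q i j =
      (∑' n : ℕ, aQ q i n * aQ q j n) +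
        ∑' d : ℕ, ∑' n : ℕ, aQ q i (n + d + 1) * aQ q j n := zetaQStar2_eq hq0 hq1 hi hj
  have hB : zetaQStar2 q j i =
      (∑' n : ℕ, aQ q i n * aQ q j n) +
        ∑' d : ℕ, ∑' n : ℕ, aQ q i n * aQ q j (n + d + 1) := by
    rw [zetaQStar2_eq hq0 hq1 hj hi]
    congr 1
    · exact tsum_congr fun n => mul_comm _ _
    · exact tsum_congr fun d => tsum_congr fun n => mul_comm _ _
  have hD := zeta_diag hq0 hq1 hi hj
  linarith
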